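/- arXiv:1607.07979 — 2 statements merged into one kernel-verified Lean document; each statement's English description precedes it below -/
import Mathlib

section
/- Let R be a Noetherian ring, J an ideal of R with separated J-adic filtration (the intersection of all powers of J is zero), and I an ideal of R contained in J. Let A = R/I with the induced filtration by the images of the powers of J. Then the associated graded ring of A with respect to this induced filtration is isomorphic to the quotient of the associated graded ring gr_J(R) by the ideal In_J(I) of initial forms of elements of I; equivalently, there is a short exact sequence 0 → In_J(I) → gr_J(R) → gr(A) → 0. -/
/-- Let `R` be a Noetherian ring, `J` an ideal of `R` whose powers form a
separated filtration (`⋂ᵢ Jⁱ = 0`), and `I ⊆ J` an ideal.  Let `A = R/I` with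
the induced filtration `J̃ᵢ = (Jⁱ + I)/I = (image of Jⁱ in A)`.  Then
`gr(A) ≅ gr_J(R)/In_J(I)`; equivalently there is a short exact sequence
`0 → In_J(I) → gr_J(R) → gr(A) → 0`.  We state this degreewise: for every `i`,
the natural map `φᵢ` from the degree-`i` piece `Jⁱ/J^{i+1}` of `gr_J(R)` to the
degree-`i` piece `J̃ᵢ/J̃_{i+1}` of `gr(A)`, sending the class of `y ∈ Jⁱ` to the
class of its image in `A`, is surjective with kernel exactly the degree-`i`
piece `(I ∩ Jⁱ + J^{i+1})/J^{i+1}` of the ideal of initial forms `In_J(I)`. -/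
theorem gr_of_quotient_exact_sequence (R : Type*) [CommRing R] [IsNoetherianRing R]
    (I J : Ideal R) (hIJ : I ≤ J) (hsep : (⨅ i : ℕ, J ^ i) = ⊥) (i : ℕ) :
    ∃ φ : (↥(J ^ i) ⧸ (Submodule.comap (J ^ i).subtype (J ^ (i + 1)))) →+
        (↥(Ideal.map (Ideal.Quotient.mk I) (J ^ i)) ⧸
          (Submodule.comap (Ideal.map (Ideal.Quotient.mk I) (J ^ i)).subtype
            (Ideal.map (Ideal.Quotient.mk I) (J ^ (i + 1))))),
      Function.Surjective φ ∧
      (∀ y : ↥(J ^ i),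
        φ (Submodule.Quotient.mk y) =
          Submodule.Quotient.mk
            ⟨Ideal.Quotient.mk I (y : R), Ideal.mem_map_of_mem _ y.2⟩) ∧
      (∀ y : ↥(J ^ i),
        φ (Submodule.Quotient.mk y) = 0 ↔ (y : R) ∈ I ⊓ J ^ i ⊔ J ^ (i + 1)) := by
  set N := Submodule.comap (J ^ i).subtype (J ^ (i + 1)) with hN
  set M := Ideal.map (Ideal.Quotient.mk I) (J ^ i) with hM
  set N' := Submodule.comap M.subtype (Ideal.map (Ideal.Quotient.mk I) (J ^ (i + 1)))
    with hN'
  -- the basic map on the submodule level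
  let f : ↥(J ^ i) →+ ↥M :=
    { toFun := fun y => ⟨Ideal.Quotient.mk I (y : R), Ideal.mem_map_of_mem _ y.2⟩
      map_zero' := by ext; simp
      map_add' := fun a b => by ext; simp }
  let g : ↥(J ^ i) →+ (↥M ⧸ N') := (N'.mkQ.toAddMonoidHom).comp f
  have hg : ∀ y ∈ N.toAddSubgroup, g y = 0 := by
    intro y hy
    have : f y ∈ N' := by
      simpa [hN', f] using Ideal.mem_map_of_mem (Ideal.Quotient.mk I) hy
    simpa [g] using (Submodule.Quotient.mk_eq_zero N').2 this
  refine ⟨QuotientAddGroup.lift N.toAddSubgroup g hg, ?_, fun y => rfl, ?_⟩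
  · intro x
    obtain ⟨⟨z, hz⟩, rfl⟩ := Submodule.Quotient.mk_surjective N' x
    obtain ⟨y, hy, rfl⟩ :=
      (Ideal.mem_map_iff_of_surjective _ Ideal.Quotient.mk_surjective).1 hz
    exact ⟨Submodule.Quotient.mk ⟨y, hy⟩, rfl⟩
  · intro y
    show (Submodule.Quotient.mk (f y) : ↥M ⧸ N') = 0 ↔ _
    rw [Submodule.Quotient.mk_eq_zero]
    have h2 : f y ∈ N' ↔ Ideal.Quotient.mk I (y : R) ∈
        Ideal.map (Ideal.Quotient.mk I) (J ^ (i + 1)) := Iff.rfl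
    rw [h2, Ideal.mem_quotient_iff_mem_sup]
    constructor
    · intro h
      obtain ⟨a, ha, b, hb, hab⟩ := Submodule.mem_sup.1 h
      have hbJ : b ∈ J ^ i := by
        have hb' : b = (y : R) - a := by rw [← hab]; ring
        rw [hb']
        exact Submodule.sub_mem _ y.2 (Ideal.pow_le_pow_right (Nat.le_succ i) ha)
      exact Submodule.mem_sup.2 ⟨b, ⟨hb, hbJ⟩, a, ha, by rw [← hab]; ring⟩
    · intro h
      obtain ⟨a, ha, b, hb, hab⟩ := Submodule.mem_sup.1 h
      exact Submodule.mem_sup.2 ⟨b, hb, a, ha.1, by rw [← hab]; ring⟩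
end

section
/- Let O be a Noetherian local ring with maximal ideal m such that gr_m(O) ≅ k[T₁,…,Tₙ]/(F₁,…,F_c), where the F_i are homogeneous polynomials of degrees d_i forming a regular sequence in the polynomial ring (each F_i is a non-zerodivisor in k[T₁,…,Tₙ]/(F₁,…,F_{i−1})). Then the multiplicity of O equals the product of the degrees: e_m(O) = d₁·d₂···d_c. -/
namespace CIProofAux

open MvPolynomial Finset
set_option maxHeartbeats 1000000
set_option synthInstance.maxHeartbeats 400000

variable {k : Type*} [Field k] {n : ℕ}

lemma hc_mul_homog (r F : MvPolynomial (Fin n) k) {d : ℕ} (hF : F.IsHomogeneous d) (j : ℕ) :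
    homogeneousComponent j (r * F) =
      if d ≤ j then homogeneousComponent (j - d) r * F else 0 := by
  conv_lhs => rw [← sum_homogeneousComponent r, Finset.sum_mul, map_sum]
  have key : ∀ i, homogeneousComponent j (homogeneousComponent i r * F) =
      if i = j - d ∧ d ≤ j then homogeneousComponent i r * F else 0 := by
    intro i
    rw [homogeneousComponent_of_mem ((homogeneousComponent_isHomogeneous i r).mul hF)]
    congr 1
    simp only [eq_iff_iff]
    omega
  simp only [key]
  by_cases hd : d ≤ j
  · simp only [hd, and_true]
    rw [Finset.sum_ite_eq' (range (r.totalDegree + 1)) (j - d)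
      (fun i => homogeneousComponent i r * F)]
    by_cases hmem : j - d ∈ range (r.totalDegree + 1)
    · simp [hmem]
    · simp only [Finset.mem_range] at hmem
      rw [homogeneousComponent_eq_zero _ r (show r.totalDegree < j - d by omega), zero_mul]
      simp
  · simp [hd]

noncomputable def hdim (k : Type*) [Field k] (n : ℕ) (I : Ideal (MvPolynomial (Fin n) k))
    (j : ℕ) : ℕ :=
  Module.finrank k (Submodule.map (Ideal.Quotient.mkₐ k I).toLinearMap
    (homogeneousSubmodule (Fin n) k j))

lemma homsubFD (j : ℕ) : FiniteDimensional k (homogeneousSubmodule (Fin n) k j) := by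
  have h : homogeneousSubmodule (Fin n) k j ≤ restrictTotalDegree (Fin n) k j :=
    fun p hp => (mem_restrictTotalDegree _ _ _).2
      ((mem_homogeneousSubmodule _ _).1 hp).totalDegree_le
  exact Submodule.finiteDimensional_of_le h

lemma span_component_mem {S : Set (MvPolynomial (Fin n) k)}
    (hS : ∀ s ∈ S, ∃ e, s.IsHomogeneous e) {p : MvPolynomial (Fin n) k}
    (hp : p ∈ Ideal.span S) (j : ℕ) : homogeneousComponent j p ∈ Ideal.span S := by
  induction hp using Submodule.span_induction generalizing j with
  | mem s hs =>
    obtain ⟨e, he⟩ := hS s hs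
    rw [homogeneousComponent_of_mem he]
    split
    · exact Ideal.subset_span hs
    · exact Ideal.zero_mem _
  | zero => simp [Ideal.zero_mem]
  | add x y _ _ hx hy => rw [map_add]; exact Ideal.add_mem _ (hx j) (hy j)
  | smul r q _ hq =>
    have : r • q = ∑ i ∈ Finset.range (q.totalDegree + 1),
        r * homogeneousComponent i q := by
      rw [← Finset.mul_sum, sum_homogeneousComponent, smul_eq_mul]
    rw [this, map_sum]
    refine Ideal.sum_mem _ fun i _ => ?_
    rw [hc_mul_homog r _ (homogeneousComponent_isHomogeneous i q) j]
    split
    · exact Ideal.mul_mem_left _ _ (hq i)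
    · exact Ideal.zero_mem _

lemma hdim_step (I : Ideal (MvPolynomial (Fin n) k))
    (hIc : ∀ p ∈ I, ∀ j, homogeneousComponent j p ∈ I)
    {F : MvPolynomial (Fin n) k} {d : ℕ} (hF : F.IsHomogeneous d)
    (hrg : ∀ x, F * x ∈ I → x ∈ I) (j : ℕ) :
    hdim k n I j = hdim k n (I ⊔ Ideal.span {F}) j +
      (if d ≤ j then hdim k n I (j - d) else 0) := by
  classical
  set I' : Ideal (MvPolynomial (Fin n) k) := I ⊔ Ideal.span {F} with hI'
  have hle : I ≤ I' := le_sup_left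
  have hFI' : F ∈ I' :=
    (le_sup_right : Ideal.span {F} ≤ I') (Ideal.mem_span_singleton_self F)
  let π : (MvPolynomial (Fin n) k ⧸ I) →ₐ[k] (MvPolynomial (Fin n) k ⧸ I') :=
    Ideal.quotientMapₐ I' (AlgHom.id k _) (fun x hx => by simpa using hle hx)
  have hmka : ∀ p : MvPolynomial (Fin n) k,
      (Ideal.Quotient.mkₐ k I).toLinearMap p = Ideal.Quotient.mk I p := fun p => rfl
  have hπmk : ∀ p : MvPolynomial (Fin n) k,
      π (Ideal.Quotient.mk I p) = Ideal.Quotient.mk I' p := by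
    intro p; simp [π]
  set M := Submodule.map (Ideal.Quotient.mkₐ k I).toLinearMap
    (homogeneousSubmodule (Fin n) k j) with hM
  haveI := homsubFD (k := k) (n := n) j
  haveI : FiniteDimensional k M := inferInstance
  let f : M →ₗ[k] (MvPolynomial (Fin n) k ⧸ I') := π.toLinearMap ∘ₗ M.subtype
  -- range f
  have hrange : LinearMap.range f =
      Submodule.map (Ideal.Quotient.mkₐ k I').toLinearMap
        (homogeneousSubmodule (Fin n) k j) := by
    rw [LinearMap.range_comp, Submodule.range_subtype, hM, ← Submodule.map_comp]
    have hcm : π.toLinearMap ∘ₗ (Ideal.Quotient.mkₐ k I).toLinearMap =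
        (Ideal.Quotient.mkₐ k I').toLinearMap := LinearMap.ext fun p => by simpa using hπmk p
    rw [hcm]
  -- kernel as intersection
  have hkerf : LinearMap.ker f = Submodule.comap M.subtype
      (M ⊓ LinearMap.ker π.toLinearMap) := by
    rw [LinearMap.ker_comp, Submodule.comap_inf, Submodule.comap_subtype_self]
    simp
  -- the multiplication map
  let μ : (MvPolynomial (Fin n) k ⧸ I) →ₗ[k] (MvPolynomial (Fin n) k ⧸ I) :=
    LinearMap.mulLeft k (Ideal.Quotient.mk I F)
  have hμ : ∀ p : MvPolynomial (Fin n) k,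
      μ (Ideal.Quotient.mk I p) = Ideal.Quotient.mk I (F * p) := by
    intro p; simp [μ, LinearMap.mulLeft_apply, ← map_mul]
  have hμinj : Function.Injective μ := by
    rw [← LinearMap.ker_eq_bot, eq_bot_iff]
    rintro x hx
    obtain ⟨p, rfl⟩ := Ideal.Quotient.mk_surjective x
    rw [LinearMap.mem_ker, hμ, Ideal.Quotient.eq_zero_iff_mem] at hx
    simpa [Submodule.mem_bot, Ideal.Quotient.eq_zero_iff_mem] using hrg p hx
  -- key: intersection computation
  have hker2 : (M ⊓ LinearMap.ker π.toLinearMap) =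
      if d ≤ j then Submodule.map μ (Submodule.map (Ideal.Quotient.mkₐ k I).toLinearMap
        (homogeneousSubmodule (Fin n) k (j - d))) else ⊥ := by
    ext x
    constructor
    · rintro ⟨hxM, hxK⟩
      obtain ⟨p, hp, rfl⟩ := hxM
      have hpj : homogeneousComponent j p = p := by
        rw [homogeneousComponent_of_mem hp, if_pos rfl]
      have hpI' : p ∈ I' := by
        have h0 : π (Ideal.Quotient.mk I p) = 0 := hxK
        rwa [hπmk, Ideal.Quotient.eq_zero_iff_mem] at h0
      obtain ⟨q, hq, s, hs, hqs⟩ := Submodule.mem_sup.mp hpI'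
      obtain ⟨r, rfl⟩ := Ideal.mem_span_singleton'.mp hs
      have hcomp : p = homogeneousComponent j q +
          (if d ≤ j then homogeneousComponent (j - d) r * F else 0) := by
        conv_lhs => rw [← hpj, ← hqs]
        rw [map_add, hc_mul_homog r F hF j]
      by_cases hd : d ≤ j
      · rw [if_pos hd] at hcomp ⊢
        have hsub : p - homogeneousComponent (j - d) r * F ∈ I := by
          rw [hcomp]; simpa using hIc q hq j
        refine ⟨Ideal.Quotient.mk I (homogeneousComponent (j - d) r),
          ⟨homogeneousComponent (j - d) r, homogeneousComponent_mem _ _, rfl⟩, ?_⟩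
        rw [hmka, hμ, Ideal.Quotient.mk_eq_mk_iff_sub_mem]
        simpa [mul_comm] using neg_mem hsub
      · rw [if_neg hd] at hcomp ⊢
        have hpI : p ∈ I := by rw [hcomp, add_zero]; exact hIc q hq j
        simpa [Submodule.mem_bot, Ideal.Quotient.eq_zero_iff_mem] using hpI
    · intro hx
      by_cases hd : d ≤ j
      · rw [if_pos hd] at hx
        obtain ⟨y, ⟨z, hz, rfl⟩, rfl⟩ := hx
        constructor
        · refine ⟨F * z, ?_, by rw [hmka, hmka, hμ]⟩
          have hm := hF.mul ((mem_homogeneousSubmodule _ _).mp hz)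
          rwa [Nat.add_sub_cancel' hd] at hm
        · have hFz : F * z ∈ I' := Ideal.mul_mem_right _ _ hFI'
          simp only [SetLike.mem_coe, LinearMap.mem_ker, hmka, hμ]
          exact (hπmk (F * z)).trans (by rw [Ideal.Quotient.eq_zero_iff_mem]; exact hFz : Ideal.Quotient.mk I' (F * z) = 0)
      · rw [if_neg hd] at hx
        simp only [Submodule.mem_bot] at hx
        simp [hx]
  -- finrank of kernel
  haveI := homsubFD (k := k) (n := n) (j - d)
  have hkerrank : Module.finrank k (LinearMap.ker f) =
      if d ≤ j then hdim k n I (j - d) else 0 := by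
    have e1 : Module.finrank k (LinearMap.ker f) =
        Module.finrank k (M ⊓ LinearMap.ker π.toLinearMap :
          Submodule k (MvPolynomial (Fin n) k ⧸ I)) := by
      rw [hkerf]
      exact (Submodule.comapSubtypeEquivOfLe inf_le_left).finrank_eq
    rw [e1, hker2]
    by_cases hd : d ≤ j
    · rw [if_pos hd, if_pos hd]
      rw [← (Submodule.equivMapOfInjective μ hμinj _).finrank_eq]
      rfl
    · rw [if_neg hd, if_neg hd, finrank_bot]
  -- rank-nullity
  have hrn := LinearMap.finrank_range_add_finrank_ker f
  rw [hrange, hkerrank] at hrn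
  exact hrn.symm

noncomputable def hseries (k : Type*) [Field k] (n : ℕ)
    (I : Ideal (MvPolynomial (Fin n) k)) : PowerSeries ℤ :=
  PowerSeries.mk fun j => (hdim k n I j : ℤ)

lemma hseries_step (I : Ideal (MvPolynomial (Fin n) k))
    (hIc : ∀ p ∈ I, ∀ j, homogeneousComponent j p ∈ I)
    {F : MvPolynomial (Fin n) k} {d : ℕ} (hF : F.IsHomogeneous d)
    (hrg : ∀ x, F * x ∈ I → x ∈ I) :
    hseries k n (I ⊔ Ideal.span {F}) = (1 - PowerSeries.X ^ d) * hseries k n I := by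
  ext j
  rw [sub_mul, one_mul, map_sub, PowerSeries.coeff_X_pow_mul']
  have := hdim_step I hIc hF hrg j
  simp only [hseries, PowerSeries.coeff_mk]
  rw [this]
  push_cast
  split <;> ring

lemma reg_of_isWeaklyRegular {L : List (MvPolynomial (Fin n) k)}
    (h : RingTheory.Sequence.IsWeaklyRegular (MvPolynomial (Fin n) k) L)
    {i : ℕ} (hi : i < L.length) (x : MvPolynomial (Fin n) k)
    (hx : L[i] * x ∈ Ideal.ofList (L.take i)) : x ∈ Ideal.ofList (L.take i) := by
  have hreg := h.regular_mod_prev i hi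
  set J : Ideal (MvPolynomial (Fin n) k) := Ideal.ofList (L.take i) with hJ
  have hsm : (J • ⊤ : Submodule (MvPolynomial (Fin n) k) (MvPolynomial (Fin n) k)) = J := by
    rw [smul_eq_mul, Ideal.mul_top]
  rw [hsm] at hreg
  have h0 : L[i] • (Submodule.Quotient.mk x :
      MvPolynomial (Fin n) k ⧸ (J : Submodule (MvPolynomial (Fin n) k) (MvPolynomial (Fin n) k)))
      = L[i] • (Submodule.Quotient.mk 0) := by
    rw [← Submodule.Quotient.mk_smul, ← Submodule.Quotient.mk_smul]
    rw [Submodule.Quotient.eq]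
    simpa [smul_eq_mul] using hx
  have := hreg h0
  rw [Submodule.Quotient.eq] at this
  simpa using this

lemma hseries_take (L : List (MvPolynomial (Fin n) k))
    (hL : ∀ p ∈ L, ∃ e, p.IsHomogeneous e)
    (hrg : ∀ i (hi : i < L.length) x, L[i] * x ∈ Ideal.ofList (L.take i) →
      x ∈ Ideal.ofList (L.take i))
    (D : ℕ → ℕ) (hD : ∀ i (hi : i < L.length), (L[i]).IsHomogeneous (D i)) :
    ∀ i, i ≤ L.length → hseries k n (Ideal.ofList (L.take i)) =
      (∏ t ∈ range i, (1 - PowerSeries.X ^ (D t))) * hseries k n (⊥ : Ideal (MvPolynomial (Fin n) k)) := by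
  intro i
  induction i with
  | zero => intro _; simp
  | succ i ih =>
    intro hi1
    have hi : i < L.length := hi1
    have htake : Ideal.ofList (L.take (i + 1)) =
        Ideal.ofList (L.take i) ⊔ Ideal.span {L[i]} := by
      rw [List.take_succ, Ideal.ofList_append, List.getElem?_eq_getElem hi]
      simp [Ideal.ofList_singleton]
    have hIc : ∀ p ∈ Ideal.ofList (L.take i), ∀ j,
        homogeneousComponent j p ∈ Ideal.ofList (L.take i) := by
      intro p hp j
      refine span_component_mem ?_ hp j
      intro s hs
      exact hL s (List.mem_of_mem_take hs)
    rw [htake, hseries_step _ hIc (hD i hi) (hrg i hi), ih (le_of_lt hi),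
      Finset.prod_range_succ, ← mul_assoc, mul_comm (∏ t ∈ range i, _) (1 - PowerSeries.X ^ D i)]

lemma take_ofFnX_set (i : ℕ) :
    {r | r ∈ (List.ofFn (X : Fin n → MvPolynomial (Fin n) k)).take i} =
      X '' {t : Fin n | (t : ℕ) < i} := by
  ext r
  simp only [Set.mem_setOf_eq, List.mem_iff_getElem, Set.mem_image]
  constructor
  · rintro ⟨jj, hjj, rfl⟩
    rw [List.getElem_take, List.getElem_ofFn]
    simp only [List.length_take, List.length_ofFn, lt_min_iff] at hjj
    exact ⟨_, by simpa using hjj.1, rfl⟩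
  · rintro ⟨t, ht, rfl⟩
    have htn : (t : ℕ) < n := t.2
    have hlen : (t : ℕ) < ((List.ofFn (X : Fin n → MvPolynomial (Fin n) k)).take i).length := by
      simp only [List.length_take, List.length_ofFn, lt_min_iff]
      exact ⟨ht, htn⟩
    refine ⟨(t : ℕ), hlen, ?_⟩
    rw [List.getElem_take, List.getElem_ofFn]

lemma X_take_regular (i : ℕ) (hi : i < n) (p : MvPolynomial (Fin n) k)
    (hp : (X (⟨i, hi⟩ : Fin n)) * p ∈
      Ideal.ofList ((List.ofFn (X : Fin n → MvPolynomial (Fin n) k)).take i)) :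
    p ∈ Ideal.ofList ((List.ofFn (X : Fin n → MvPolynomial (Fin n) k)).take i) := by
  rw [Ideal.ofList, take_ofFnX_set i, mem_ideal_span_X_image] at hp ⊢
  intro m hm
  have hm' : m + Finsupp.single (⟨i, hi⟩ : Fin n) 1 ∈
      (X (⟨i, hi⟩ : Fin n) * p).support := by
    rw [support_X_mul]
    rw [add_comm]
    exact Finset.mem_map.mpr ⟨m, hm, rfl⟩
  obtain ⟨u, hu, hne⟩ := hp _ hm'
  refine ⟨u, hu, ?_⟩
  have hut : u ≠ (⟨i, hi⟩ : Fin n) := by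
    intro h
    rw [h] at hu
    exact absurd hu (lt_irrefl i)
  simpa [Finsupp.single_apply, hut.symm, Ne.symm hut] using hne

lemma spanX_ne_top (s : Set (Fin n)) :
    Ideal.span (X '' s : Set (MvPolynomial (Fin n) k)) ≠ ⊤ := by
  intro h
  have h1 : (1 : MvPolynomial (Fin n) k) ∈ Ideal.span (X '' s) := h ▸ Submodule.mem_top
  rw [mem_ideal_span_X_image] at h1
  have h0 : (0 : Fin n →₀ ℕ) ∈ (1 : MvPolynomial (Fin n) k).support := by
    rw [mem_support_iff]
    simp
  obtain ⟨u, _, hu⟩ := h1 _ h0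
  simp at hu

lemma hdim_spanX (j : ℕ) :
    hdim k n (Ideal.span (X '' (Set.univ : Set (Fin n)))) j = if j = 0 then 1 else 0 := by
  classical
  set V : Ideal (MvPolynomial (Fin n) k) := Ideal.span (X '' Set.univ) with hV
  haveI : Nontrivial (MvPolynomial (Fin n) k ⧸ V) :=
    Ideal.Quotient.nontrivial_iff.mpr (spanX_ne_top _)
  by_cases hj : j = 0
  · subst hj
    rw [if_pos rfl]
    have hmap : Submodule.map (Ideal.Quotient.mkₐ k V).toLinearMap
        (homogeneousSubmodule (Fin n) k 0) =
        Submodule.span k {(1 : MvPolynomial (Fin n) k ⧸ V)} := by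
      apply le_antisymm
      · rintro x ⟨p, hp, rfl⟩
        have hpc : p = C (coeff 0 p) := by
          rw [← homogeneousComponent_zero p, homogeneousComponent_of_mem hp, if_pos rfl]
        rw [hpc]
        have h1 : (Ideal.Quotient.mkₐ k V).toLinearMap (C (coeff 0 p)) =
            (coeff 0 p) • (1 : MvPolynomial (Fin n) k ⧸ V) := by
          rw [show (C (coeff 0 p) : MvPolynomial (Fin n) k) =
              (coeff 0 p) • (1 : MvPolynomial (Fin n) k) by rw [smul_eq_C_mul, mul_one],
            map_smul]
          congr 1
        rw [h1]
        exact Submodule.smul_mem _ _ (Submodule.mem_span_singleton_self _)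
      · rw [Submodule.span_le, Set.singleton_subset_iff]
        exact ⟨1, isHomogeneous_one _ _, map_one (Ideal.Quotient.mkₐ k V)⟩
    rw [hdim, hmap,
      finrank_span_singleton (one_ne_zero : (1 : MvPolynomial (Fin n) k ⧸ V) ≠ 0)]
  · rw [if_neg hj]
    have hmap : Submodule.map (Ideal.Quotient.mkₐ k V).toLinearMap
        (homogeneousSubmodule (Fin n) k j) = ⊥ := by
      rw [eq_bot_iff]
      rintro x ⟨p, hp, rfl⟩
      have hpV : p ∈ V := by
        rw [hV, mem_ideal_span_X_image]
        intro m hm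
        have hdeg := ((mem_homogeneousSubmodule _ _).mp hp) (mem_support_iff.mp hm)
        by_contra hc
        push_neg at hc
        simp only [Set.mem_univ, forall_true_left] at hc
        have hm0 : m = 0 := Finsupp.ext fun u => hc u
        rw [hm0] at hdeg
        simp at hdeg
        exact hj (by omega)
      simp only [Submodule.mem_bot]
      simpa [Ideal.Quotient.mkₐ_eq_mk, Ideal.Quotient.eq_zero_iff_mem] using hpV
    rw [hdim, hmap, finrank_bot]

lemma ofList_ofFnX_eq :
    Ideal.ofList (List.ofFn (X : Fin n → MvPolynomial (Fin n) k)) =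
      Ideal.span (X '' (Set.univ : Set (Fin n))) := by
  have h1 : (List.ofFn (X : Fin n → MvPolynomial (Fin n) k)).take n =
      List.ofFn (X : Fin n → MvPolynomial (Fin n) k) :=
    List.take_of_length_le (by simp)
  have h2 := take_ofFnX_set (k := k) (n := n) n
  rw [h1] at h2
  have h3 : ({t : Fin n | (t : ℕ) < n}) = Set.univ := by
    ext t; simp [t.2]
  rw [Ideal.ofList, h2, h3]

lemma hseries_bot_identity :
    (1 - PowerSeries.X) ^ n * hseries k n (⊥ : Ideal (MvPolynomial (Fin n) k)) = 1 := by
  have hmain := hseries_take (k := k) (n := n)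
    (List.ofFn (X : Fin n → MvPolynomial (Fin n) k))
    (by
      intro p hp
      rw [List.mem_ofFn] at hp
      obtain ⟨t, rfl⟩ := hp
      exact ⟨1, isHomogeneous_X _ _⟩)
    (by
      intro i hi x hx
      have hi' : i < n := by simpa using hi
      have hg : (List.ofFn (X : Fin n → MvPolynomial (Fin n) k))[i] = X ⟨i, hi'⟩ := by
        simp
      rw [hg] at hx
      exact X_take_regular i hi' x hx)
    (fun _ => 1)
    (by
      intro i hi
      have hi' : i < n := by simpa using hi
      have hg : (List.ofFn (X : Fin n → MvPolynomial (Fin n) k))[i] = X ⟨i, hi'⟩ := by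
        simp
      rw [hg]
      exact isHomogeneous_X _ _)
    n (by simp)
  have h1 : (List.ofFn (X : Fin n → MvPolynomial (Fin n) k)).take n =
      List.ofFn (X : Fin n → MvPolynomial (Fin n) k) :=
    List.take_of_length_le (by simp)
  rw [h1, ofList_ofFnX_eq] at hmain
  have h2 : hseries k n (Ideal.span (X '' (Set.univ : Set (Fin n)))) = 1 := by
    ext j
    simp only [hseries, PowerSeries.coeff_mk, hdim_spanX, PowerSeries.coeff_one]
    split <;> simp
  rw [h2] at hmain
  simp only [pow_one, Finset.prod_const, Finset.card_range] at hmain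
  exact hmain.symm

lemma hdim_zero_pos (I : Ideal (MvPolynomial (Fin n) k)) (hne : I ≠ ⊤) :
    1 ≤ hdim k n I 0 := by
  haveI : Nontrivial (MvPolynomial (Fin n) k ⧸ I) := Ideal.Quotient.nontrivial_iff.mpr hne
  haveI := homsubFD (k := k) (n := n) 0
  rw [Nat.one_le_iff_ne_zero]
  intro h0
  have hbot := Submodule.finrank_eq_zero.mp h0
  have h1 : (1 : MvPolynomial (Fin n) k ⧸ I) ∈
      Submodule.map (Ideal.Quotient.mkₐ k I).toLinearMap
        (homogeneousSubmodule (Fin n) k 0) :=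
    ⟨1, isHomogeneous_one _ _, map_one (Ideal.Quotient.mkₐ k I)⟩
  rw [hbot] at h1
  exact one_ne_zero (Submodule.mem_bot _ |>.mp h1)

lemma hseries_main {c : ℕ} (F : Fin c → MvPolynomial (Fin n) k) (dg : Fin c → ℕ)
    (hhom : ∀ i, (F i).IsHomogeneous (dg i))
    (hwr : RingTheory.Sequence.IsWeaklyRegular (MvPolynomial (Fin n) k) (List.ofFn F)) :
    hseries k n (Ideal.span (Set.range F)) * (1 - PowerSeries.X) ^ n =
      ∏ i, (1 - PowerSeries.X ^ (dg i)) := by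
  classical
  set D : ℕ → ℕ := fun t => if h : t < c then dg ⟨t, h⟩ else 0 with hD
  have hmain := hseries_take (k := k) (n := n) (List.ofFn F)
    (by
      intro p hp
      rw [List.mem_ofFn] at hp
      obtain ⟨t, rfl⟩ := hp
      exact ⟨dg t, hhom t⟩)
    (by
      intro i hi x hx
      exact reg_of_isWeaklyRegular hwr hi x hx)
    D
    (by
      intro i hi
      have hi' : i < c := by simpa using hi
      have hg : (List.ofFn F)[i] = F ⟨i, hi'⟩ := by simp
      rw [hg, hD]
      simp only [hi', dif_pos]
      exact hhom _)
    c (by simp)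
  have h1 : (List.ofFn F).take c = List.ofFn F := List.take_of_length_le (by simp)
  have h2 : Ideal.ofList (List.ofFn F) = Ideal.span (Set.range F) := by
    rw [Ideal.ofList]
    congr 1
    ext r
    simp [List.mem_ofFn, Set.mem_range]
  rw [h1, h2] at hmain
  have h3 : (∏ t ∈ range c, (1 - PowerSeries.X ^ (D t) : PowerSeries ℤ)) =
      ∏ i : Fin c, (1 - PowerSeries.X ^ (dg i)) := by
    rw [← Fin.prod_univ_eq_prod_range (fun t => (1 - PowerSeries.X ^ (D t) : PowerSeries ℤ)) c]
    refine Finset.prod_congr rfl fun i _ => ?_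
    congr 2
    simp [hD, i.2]
  rw [hmain, h3, mul_assoc, mul_comm (hseries k n ⊥), hseries_bot_identity, mul_one]

end CIProofAux

open PowerSeries

open CIProofAux in
/-- Let `O` be a Noetherian local ring with maximal ideal `m` and residue field
`k`, containing a field mapping isomorphically onto `k`, and suppose that the
associated graded ring `gr_m(O)` is isomorphic (as a graded `k`-algebra) to
`k[T₁,…,Tₙ]/(F₁,…,F_c)` with the `Fᵢ` homogeneous of degrees `dᵢ` forming a
regular sequence; the isomorphism is recorded by the hypothesis `hgr`, which
says that `dim_k O/m^{i+1}` is the sum of the dimensions of the graded pieces of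
the complete intersection in degrees `≤ i`.  Then the multiplicity of `O` equals
the product of the degrees:  writing the Hilbert–Samuel series
`Σ dim_k(O/m^{i+1})Tⁱ` as `Q(T)/(1−T)^{(n−c)+1}` (so that `e_m(O) = Q(1)`), one
has `e_m(O) = Q(1) = d₁⋯d_c`. -/
theorem multiplicity_of_complete_intersection_tangent_cone
    (O k : Type*) [CommRing O] [Field k] [Algebra k O]
    [IsNoetherianRing O] [IsLocalRing O]
    (hres : Function.Bijective ((IsLocalRing.residue O).comp (algebraMap k O)))
    (n c : ℕ) (F : Fin c → MvPolynomial (Fin n) k) (dg : Fin c → ℕ)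
    (hhom : ∀ i, (F i).IsHomogeneous (dg i))
    (hreg : RingTheory.Sequence.IsRegular (MvPolynomial (Fin n) k) (List.ofFn F))
    (hgr : ∀ i : ℕ,
      Module.finrank k (O ⧸ (IsLocalRing.maximalIdeal O) ^ (i + 1)) =
        ∑ j ∈ Finset.range (i + 1),
          Module.finrank k
            (Submodule.map
              (Ideal.Quotient.mkₐ k (Ideal.span (Set.range F))).toLinearMap
              (MvPolynomial.homogeneousSubmodule (Fin n) k j))) :
    ∃ Q : Polynomial ℤ,
      (PowerSeries.mk fun i =>
          (Module.finrank k (O ⧸ (IsLocalRing.maximalIdeal O) ^ (i + 1)) : ℤ)) *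
          (1 - PowerSeries.X) ^ (n - c + 1) = (Q : PowerSeries ℤ) ∧
      Q.eval 1 = ∏ i, (dg i : ℤ) := by
  classical
  set I : Ideal (MvPolynomial (Fin n) k) := Ideal.span (Set.range F) with hI
  set H : PowerSeries ℤ := PowerSeries.mk fun i =>
    (Module.finrank k (O ⧸ (IsLocalRing.maximalIdeal O) ^ (i + 1)) : ℤ) with hH
  have hofList : Ideal.ofList (List.ofFn F) = I := by
    rw [Ideal.ofList, hI]
    congr 1
    ext r
    simp [List.mem_ofFn, Set.mem_range]
  have hne : I ≠ ⊤ := by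
    intro h
    apply hreg.top_ne_smul
    rw [smul_eq_mul, Ideal.mul_top, hofList, h]
  -- coefficients of H
  have hHc : ∀ i : ℕ, (PowerSeries.coeff i) H =
      ((∑ j ∈ Finset.range (i + 1), hdim k n I j : ℕ) : ℤ) := by
    intro i
    rw [hH, PowerSeries.coeff_mk]
    exact_mod_cast congrArg (fun m : ℕ => (m : ℤ)) (hgr i)
  -- H * (1 - X) = hseries
  have hHX : H * (1 - PowerSeries.X) = hseries k n I := by
    ext j
    rw [mul_sub, mul_one, map_sub]
    cases j with
    | zero =>
      rw [PowerSeries.coeff_zero_mul_X, hHc 0]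
      simp [hseries]
    | succ m =>
      rw [PowerSeries.coeff_succ_mul_X, hHc (m + 1), hHc m]
      simp only [hseries, PowerSeries.coeff_mk]
      rw [Finset.sum_range_succ (fun j => hdim k n I j) (m + 1)]
      push_cast
      ring
  have hmain := hseries_main F dg hhom hreg.toIsWeaklyRegular
  -- the candidate polynomial
  set SP : Polynomial ℤ := ∏ i, (∑ t ∈ Finset.range (dg i), Polynomial.X ^ t) with hSP
  have hSPeval : SP.eval 1 = ∏ i, (dg i : ℤ) := by
    rw [hSP, Polynomial.eval_prod]
    refine Finset.prod_congr rfl fun i _ => ?_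
    rw [Polynomial.eval_finset_sum]
    simp
  have hgeom : ∀ i : Fin c,
      ((∑ t ∈ Finset.range (dg i), Polynomial.X ^ t) * (1 - Polynomial.X) : Polynomial ℤ) =
        1 - Polynomial.X ^ (dg i) := by
    intro i
    have := geom_sum_mul (Polynomial.X : Polynomial ℤ) (dg i)
    linear_combination -this
  have hSPc : (SP : PowerSeries ℤ) * (1 - PowerSeries.X) ^ c =
      ∏ i, (1 - PowerSeries.X ^ (dg i)) := by
    have hp : (SP * (1 - Polynomial.X) ^ c : Polynomial ℤ) =
        ∏ i, (1 - Polynomial.X ^ (dg i)) := by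
      rw [hSP, show ((1 - Polynomial.X) ^ c : Polynomial ℤ) =
          ∏ _i : Fin c, (1 - Polynomial.X) by simp, ← Finset.prod_mul_distrib]
      exact Finset.prod_congr rfl fun i _ => hgeom i
    have hcast := congrArg (Polynomial.coeToPowerSeries.ringHom (R := ℤ)) hp
    simpa [map_mul, map_pow, map_sub, map_one, map_prod] using hcast
  have h1Xne : (1 - PowerSeries.X : PowerSeries ℤ) ≠ 0 := by
    intro h
    have := congrArg (PowerSeries.coeff 1) h
    simp at this
  by_cases hcn : c ≤ n
  · refine ⟨SP, ?_, hSPeval⟩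
    apply mul_right_cancel₀ (pow_ne_zero c h1Xne)
    calc H * (1 - PowerSeries.X) ^ (n - c + 1) * (1 - PowerSeries.X) ^ c
        = (H * (1 - PowerSeries.X)) * (1 - PowerSeries.X) ^ n := by
          rw [mul_assoc, ← pow_add, mul_assoc, ← pow_succ']
          congr 2
          omega
      _ = ∏ i, (1 - PowerSeries.X ^ (dg i)) := by rw [hHX, hmain]
      _ = (SP : PowerSeries ℤ) * (1 - PowerSeries.X) ^ c := hSPc.symm
  · exfalso
    have hcn' : n < c := not_le.mp hcn
    set q : Polynomial ℤ := SP * (1 - Polynomial.X) ^ (c - n) with hq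
    have heq : hseries k n I = (q : PowerSeries ℤ) := by
      apply mul_right_cancel₀ (pow_ne_zero n h1Xne)
      rw [hmain, ← hSPc, hq]
      push_cast [map_mul, map_pow, map_sub, map_one]
      rw [mul_assoc, ← pow_add]
      congr 2
      omega
    have hqc : ∀ j, q.coeff j = (hdim k n I j : ℤ) := by
      intro j
      have := congrArg (PowerSeries.coeff j) heq
      rw [hseries, PowerSeries.coeff_mk, Polynomial.coeff_coe] at this
      exact this.symm
    have hq1 : q.eval 1 = 0 := by
      rw [hq, Polynomial.eval_mul, Polynomial.eval_pow]
      simp [zero_pow (show c - n ≠ 0 by omega)]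
    have hsum : ∑ j ∈ Finset.range (q.natDegree + 1), q.coeff j = 0 := by
      rw [← hq1, Polynomial.eval_eq_sum_range]
      simp
    have hc0 : q.coeff 0 = 0 := by
      refine (Finset.sum_eq_zero_iff_of_nonneg ?_).mp hsum 0 (by simp)
      intro j _
      rw [hqc j]
      positivity
    have hpos := hdim_zero_pos I hne
    rw [hqc 0] at hc0
    have : hdim k n I 0 = 0 := by exact_mod_cast hc0
    omega
end
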